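/- For all n ≥ 1, k ≥ 0 and p ≥ 0, the number of matrices in SM(n) whose first row has sum k and whose center column has sum p equals the number of matrices in B(n) whose last column has sum k and whose first row has sum p; that is, |SM(n,k,p)| = |B(n,k,p)|. -/

import Mathlib

open Finset

/-- Square matrices of nonnegative integers of dimension `m` (0-based indexing). -/
abbrev Mat (m : ℕ) := Matrix (Fin m) (Fin m) ℕ

/-- Upper-triangular: all entries strictly below the main diagonal vanish. -/
def UT {m : ℕ} (M : Mat m) : Prop := ∀ i j : Fin m, (j : ℕ) < (i : ℕ) → M i j = 0

/-- The size of a matrix: the sum of all its entries. -/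
def msize {m : ℕ} (M : Mat m) : ℕ := ∑ i : Fin m, ∑ j : Fin m, M i j

/-- Row `i` contains a nonzero entry. -/
def rowNonzero {m : ℕ} (M : Mat m) (i : Fin m) : Prop := ∃ j, M i j ≠ 0

/-- Column `j` contains a nonzero entry. -/
def colNonzero {m : ℕ} (M : Mat m) (j : Fin m) : Prop := ∃ i, M i j ≠ 0

/-- The dual matrix: transpose along the antidiagonal, `M̄_{i,j} = M_{m+1-j,m+1-i}`. -/
def dual {m : ℕ} (M : Mat m) : Mat m := fun i j => M j.rev i.rev

/-- A matrix is self-dual if it equals its dual. -/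
def SelfDual {m : ℕ} (M : Mat m) : Prop := M = dual M

/-- A Fishburn matrix: upper-triangular, every row and every column contains a
nonzero entry. -/
def IsFishburn {m : ℕ} (M : Mat m) : Prop :=
  UT M ∧ (∀ i, rowNonzero M i) ∧ (∀ j, colNonzero M j)

/-- The reduced size: sum of the entries in NW-cells and diagonal cells
(in 1-based terms, cells `(i,j)` with `i + j ≤ m + 1`). -/
def reducedSize {m : ℕ} (M : Mat m) : ℕ :=
  ∑ i : Fin m, ∑ j : Fin m, if (i : ℕ) + (j : ℕ) + 1 ≤ m then M i j else 0

/-- The reduced matrix: all entries in SE-cells are replaced by zeros. -/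
def reduced {m : ℕ} (M : Mat m) : Mat m :=
  fun i j => if (i : ℕ) + (j : ℕ) + 1 ≤ m then M i j else 0

/-- A super triangular matrix: upper-triangular and all SE-cells are zero. -/
def SuperTri {m : ℕ} (M : Mat m) : Prop :=
  UT M ∧ ∀ i j : Fin m, m < (i : ℕ) + (j : ℕ) + 1 → M i j = 0

/-- The sum of the first row. -/
def firstRowSum {m : ℕ} (M : Mat m) : ℕ :=
  ∑ i : Fin m, ∑ j : Fin m, if (i : ℕ) = 0 then M i j else 0

/-- The sum of the last column. -/
def lastColSum {m : ℕ} (M : Mat m) : ℕ :=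
  ∑ i : Fin m, ∑ j : Fin m, if (j : ℕ) + 1 = m then M i j else 0

/-- The sum of the diagonal cells (cells `(i,j)` with `i + j = m + 1`, 1-based). -/
def diagSum {m : ℕ} (M : Mat m) : ℕ :=
  ∑ i : Fin m, ∑ j : Fin m, if (i : ℕ) + (j : ℕ) + 1 = m then M i j else 0

/-- The sum of the center column (column `k+1` of a matrix of dimension `2k+1`). -/
def centerColSum {m : ℕ} (M : Mat m) : ℕ :=
  ∑ i : Fin m, ∑ j : Fin m, if 2 * (j : ℕ) + 1 = m then M i j else 0

/-- Square matrices of arbitrary dimension. -/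
abbrev SMat := Σ m : ℕ, Mat m

/-- `M(n)`: self-dual Fishburn matrices of reduced size `n`. -/
def Mset (n : ℕ) : Set SMat :=
  {A | IsFishburn A.2 ∧ SelfDual A.2 ∧ reducedSize A.2 = n}

/-- `M(n,k)`: matrices of `M(n)` whose first row has sum `k`. -/
def Mset₂ (n k : ℕ) : Set SMat := {A ∈ Mset n | firstRowSum A.2 = k}

/-- `M(n,k,p)`: matrices of `M(n,k)` whose diagonal cells have sum `p`. -/
def Mset₃ (n k p : ℕ) : Set SMat := {A ∈ Mset₂ n k | diagSum A.2 = p}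

/-- `EM(n,k)`: matrices of `M(n,k)` of even dimension. -/
def EMset (n k : ℕ) : Set SMat := {A ∈ Mset₂ n k | Even A.1}

/-- `OM(n,k)`: matrices of `M(n,k)` of odd dimension. -/
def OMset (n k : ℕ) : Set SMat := {A ∈ Mset₂ n k | Odd A.1}

/-- `RM(n)`: row-Fishburn matrices of size `n`. -/
def RMset (n : ℕ) : Set SMat :=
  {A | UT A.2 ∧ (∀ i, rowNonzero A.2 i) ∧ msize A.2 = n}

/-- `RM(n,k)`: row-Fishburn matrices of size `n` whose last column has sum `k`. -/
def RMset₂ (n k : ℕ) : Set SMat := {A ∈ RMset n | lastColSum A.2 = k}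

/-- `RM(n,k,p)`: matrices of `RM(n,k)` whose first row has sum `p`. -/
def RMset₃ (n k p : ℕ) : Set SMat := {A ∈ RMset₂ n k | firstRowSum A.2 = p}

/-- `SM(n)`: super triangular matrices of size `n` and dimension `2k+1` such that
(a) each of the first `k` columns contains a nonzero entry, and
(b) for `1 ≤ i ≤ k`, row `k+1-i` or column `k+1+i` contains a nonzero entry
(0-based: for `a < k`, row `a` or column `b` with `a + b = 2k` is nonzero). -/
def SMset (n : ℕ) : Set SMat :=
  {A | SuperTri A.2 ∧ msize A.2 = n ∧
    ∃ k : ℕ, A.1 = 2 * k + 1 ∧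
      (∀ j : Fin A.1, (j : ℕ) < k → colNonzero A.2 j) ∧
      (∀ a b : Fin A.1, (a : ℕ) < k → (a : ℕ) + (b : ℕ) = 2 * k →
        rowNonzero A.2 a ∨ colNonzero A.2 b)}

/-- `SM(n,k,p)`: matrices of `SM(n)` whose first row has sum `k` and whose center
column has sum `p`. -/
def SMset₃ (n k p : ℕ) : Set SMat :=
  {A ∈ SMset n | firstRowSum A.2 = k ∧ centerColSum A.2 = p}

/-- `B(n)`: upper-triangular matrices of size `n` in which every row except
possibly the first contains a nonzero entry. -/
def Bset (n : ℕ) : Set SMat :=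
  {A | UT A.2 ∧ (∀ i : Fin A.1, (i : ℕ) ≠ 0 → rowNonzero A.2 i) ∧ msize A.2 = n}

/-- `B(n,k,p)`: matrices of `B(n)` whose first row has sum `p` and whose last
column has sum `k`. -/
def Bset₃ (n k p : ℕ) : Set SMat :=
  {A ∈ Bset n | firstRowSum A.2 = p ∧ lastColSum A.2 = k}

namespace S4
attribute [local instance] Classical.propDecidable

noncomputable section

/-- extension of a matrix to all of ℕ × ℕ by zero -/
def ext {dm : ℕ} (M : Mat dm) (r v : ℕ) : ℕ :=
  if h : r < dm ∧ v < dm then M ⟨r, h.1⟩ ⟨v, h.2⟩ else 0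

lemma ext_apply {dm : ℕ} (M : Mat dm) (i j : Fin dm) : ext M i j = M i j := by
  simp [ext, i.isLt, j.isLt]

lemma ext_zero {dm : ℕ} (M : Mat dm) {r v : ℕ} (h : dm ≤ r ∨ dm ≤ v) : ext M r v = 0 := by
  unfold ext; rw [dif_neg]; omega

lemma sum_fin_eq {dm : ℕ} (F : ℕ → ℕ) : ∑ i : Fin dm, F i = ∑ i ∈ range dm, F i :=
  Fin.sum_univ_eq_sum_range F dm

lemma msize_eq {dm : ℕ} (M : Mat dm) :
    msize M = ∑ r ∈ range dm, ∑ v ∈ range dm, ext M r v := by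
  unfold msize
  rw [← sum_fin_eq (fun r => ∑ v ∈ range dm, ext M r v)]
  refine Finset.sum_congr rfl fun i _ => ?_
  rw [← sum_fin_eq (fun v => ext M (i : ℕ) v)]
  exact Finset.sum_congr rfl fun j _ => (ext_apply M i j).symm

lemma firstRowSum_eq {dm : ℕ} (M : Mat dm) (hd : 0 < dm) :
    firstRowSum M = ∑ v ∈ range dm, ext M 0 v := by
  unfold firstRowSum
  rw [Finset.sum_eq_single (⟨0, hd⟩ : Fin dm)]
  · rw [← sum_fin_eq (fun v => ext M 0 v)]
    refine Finset.sum_congr rfl fun j _ => ?_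
    rw [if_pos rfl]
    exact (ext_apply M ⟨0, hd⟩ j).symm
  · intro b _ hb
    have hb' : (b : ℕ) ≠ 0 := fun h => hb (Fin.ext h)
    exact Finset.sum_eq_zero fun j _ => if_neg hb'
  · intro h; exact absurd (Finset.mem_univ _) h

lemma lastColSum_eq {dm : ℕ} (M : Mat dm) (hd : 0 < dm) :
    lastColSum M = ∑ x ∈ range dm, ext M x (dm - 1) := by
  unfold lastColSum
  rw [← sum_fin_eq (fun x => ext M x (dm - 1))]
  refine Finset.sum_congr rfl fun i _ => ?_
  rw [Finset.sum_eq_single (⟨dm - 1, by omega⟩ : Fin dm)]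
  · rw [if_pos (by omega : (dm:ℕ) - 1 + 1 = dm)]
    exact (ext_apply M i ⟨dm - 1, by omega⟩).symm
  · intro b _ hb
    refine if_neg fun h => hb (Fin.ext ?_)
    show (b : ℕ) = dm - 1
    omega
  · intro h; exact absurd (Finset.mem_univ _) h

lemma centerColSum_eq {m : ℕ} (M : Mat (2 * m + 1)) :
    centerColSum M = ∑ r ∈ range (2 * m + 1), ext M r m := by
  unfold centerColSum
  rw [← sum_fin_eq (fun r => ext M r m)]
  refine Finset.sum_congr rfl fun i _ => ?_
  rw [Finset.sum_eq_single (⟨m, by omega⟩ : Fin (2 * m + 1))]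
  · rw [if_pos (by omega : 2 * (m:ℕ) + 1 = 2 * m + 1)]
    exact (ext_apply M i ⟨m, by omega⟩).symm
  · intro b _ hb
    refine if_neg fun h => hb (Fin.ext ?_)
    show (b : ℕ) = m
    omega
  · intro h; exact absurd (Finset.mem_univ _) h

lemma ut_ext {dm : ℕ} {M : Mat dm} (hUT : UT M) {r v : ℕ} (h : v < r) : ext M r v = 0 := by
  unfold ext; split
  · next hh => exact hUT ⟨r, hh.1⟩ ⟨v, hh.2⟩ h
  · rfl

lemma smat_eq {d1 d2 : ℕ} {M1 : Mat d1} {M2 : Mat d2} (h : d1 = d2)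
    (he : ∀ r v : ℕ, ext M1 r v = ext M2 r v) : (⟨d1, M1⟩ : SMat) = ⟨d2, M2⟩ := by
  subst h
  have : M1 = M2 := by
    funext i j
    have := he i j
    rwa [ext_apply, ext_apply] at this
  rw [this]

/-! ### keys and the φ construction -/

def kv (m u : ℕ) : ℕ := if u % 2 = 0 then m + u / 2 else m - (u + 1) / 2

def ky (m v : ℕ) : ℕ := if v < m then 2 * (m - v) - 1 else 2 * (v - m)

def cNZ {dm : ℕ} (M : Mat dm) (v : ℕ) : Prop := ∃ r, ext M r v ≠ 0

def rNZ {dm : ℕ} (M : Mat dm) (r : ℕ) : Prop := ∃ v, ext M r v ≠ 0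

lemma cNZ_iff {dm : ℕ} (M : Mat dm) (j : Fin dm) : cNZ M (j : ℕ) ↔ colNonzero M j := by
  constructor
  · rintro ⟨r, hr⟩
    have hrd : r < dm := by
      by_contra hh
      push_neg at hh
      exact hr (ext_zero M (Or.inl hh))
    exact ⟨⟨r, hrd⟩, by rw [← ext_apply M ⟨r, hrd⟩ j]; exact hr⟩
  · rintro ⟨i, hi⟩
    exact ⟨(i : ℕ), by rw [ext_apply M i j]; exact hi⟩

def Kp {dm : ℕ} (M : Mat dm) : ℕ → Prop :=
  fun u => u < dm ∧ (kv (dm / 2) u ≤ dm / 2 ∨ cNZ M (kv (dm / 2) u))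

def rowfn {dm : ℕ} (M : Mat dm) (v : ℕ) : ℕ :=
  if cNZ M (2 * (dm / 2) - v) then 2 * (dm / 2) - v else v

def dK {dm : ℕ} (M : Mat dm) : ℕ := Nat.count (Kp M) dm

def vOf {dm : ℕ} (M : Mat dm) (x : ℕ) : ℕ := kv (dm / 2) (Nat.nth (Kp M) x)

def phiM {dm : ℕ} (M : Mat dm) : Mat (dK M) :=
  fun x y => ext M (rowfn M (vOf M y)) (vOf M x)

def phi (A : SMat) : SMat := ⟨dK A.2, phiM A.2⟩

lemma kv_ky {m v : ℕ} (h : v ≤ 2 * m) : kv m (ky m v) = v := by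
  unfold kv ky; split_ifs <;> omega

lemma ky_kv {m u : ℕ} (h : u ≤ 2 * m) : ky m (kv m u) = u := by
  unfold kv ky; split_ifs <;> omega

lemma ky_le {m v : ℕ} (h : v ≤ 2 * m) : ky m v ≤ 2 * m := by
  unfold ky; split_ifs <;> omega

lemma kv_le {m u : ℕ} (h : u ≤ 2 * m) : kv m u ≤ 2 * m := by
  unfold kv; split_ifs <;> omega

section OddDim

variable {m : ℕ} (M : Mat (2 * m + 1))

lemma half_odd : (2 * m + 1) / 2 = m := by omega

lemma Kp_def (u : ℕ) : Kp M u ↔ (u < 2 * m + 1 ∧ (kv m u ≤ m ∨ cNZ M (kv m u))) := by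
  unfold Kp; rw [half_odd]

lemma Kp_odd {c : ℕ} (hc : c < m) : Kp M (2 * c + 1) := by
  rw [Kp_def]
  refine ⟨by omega, Or.inl ?_⟩
  unfold kv; split_ifs <;> omega

lemma Kp_zero : Kp M 0 := by
  rw [Kp_def]
  exact ⟨by omega, Or.inl (by unfold kv; simp)⟩

lemma Kp_even {t : ℕ} (h1 : 1 ≤ t) (h2 : t ≤ m) : Kp M (2 * t) ↔ cNZ M (m + t) := by
  rw [Kp_def]
  have hkv : kv m (2 * t) = m + t := by unfold kv; split_ifs <;> omega
  rw [hkv]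
  constructor
  · rintro ⟨-, h | h⟩
    · omega
    · exact h
  · intro h; exact ⟨by omega, Or.inr h⟩

lemma Kp_lt {u : ℕ} (h : Kp M u) : u < 2 * m + 1 := ((Kp_def M u).1 h).1

lemma Kp_ky {v : ℕ} (hv : v ≤ 2 * m) : Kp M (ky m v) ↔ (v ≤ m ∨ cNZ M v) := by
  rw [Kp_def, kv_ky hv]
  have := ky_le (m := m) hv
  constructor
  · rintro ⟨-, h⟩; exact h
  · intro h; exact ⟨by omega, h⟩

lemma Kfin : (Set.ofPred (Kp M)).Finite :=
  Set.Finite.subset (Set.finite_Iio (2 * m + 1)) (fun u hu => Kp_lt M hu)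

lemma card_K (hf : (Set.ofPred (Kp M)).Finite) : hf.toFinset.card = dK M := by
  unfold dK
  rw [Nat.count_eq_card_filter_range]
  congr 1
  ext u
  simp only [Set.Finite.mem_toFinset, Set.mem_setOf_eq, Finset.mem_filter, Finset.mem_range]
  exact ⟨fun h => ⟨Kp_lt M h, h⟩, fun h => h.2⟩

lemma nthK_mem {x : ℕ} (hx : x < dK M) : Kp M (Nat.nth (Kp M) x) :=
  Nat.nth_mem_of_lt_card (Kfin M) (by rw [card_K M (Kfin M)]; exact hx)

lemma countK_lt {u : ℕ} (hu : Kp M u) : Nat.count (Kp M) u < dK M := by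
  rw [← card_K M (Kfin M)]; exact Nat.count_lt_card (Kfin M) hu

lemma count_nthK {x : ℕ} (hx : x < dK M) : Nat.count (Kp M) (Nat.nth (Kp M) x) = x :=
  Nat.count_nth_of_lt_card_finite (Kfin M) (by rw [card_K M (Kfin M)]; exact hx)

lemma vOf_le {x : ℕ} (hx : x < dK M) : vOf M x ≤ 2 * m := by
  unfold vOf
  rw [half_odd]
  exact kv_le (by have := Kp_lt M (nthK_mem M hx); omega)

lemma ky_vOf {x : ℕ} (hx : x < dK M) : ky m (vOf M x) = Nat.nth (Kp M) x := by
  unfold vOf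
  rw [half_odd]
  exact ky_kv (by have := Kp_lt M (nthK_mem M hx); omega)

lemma vOf_mem {x : ℕ} (hx : x < dK M) : vOf M x ≤ m ∨ cNZ M (vOf M x) := by
  have h1 := (Kp_ky M (vOf_le M hx)).1
  rw [ky_vOf M hx] at h1
  exact h1 (nthK_mem M hx)

lemma vOf_count {v : ℕ} (hv : v ≤ 2 * m) (hT : v ≤ m ∨ cNZ M v) :
    vOf M (Nat.count (Kp M) (ky m v)) = v := by
  unfold vOf
  rw [half_odd, Nat.nth_count ((Kp_ky M hv).2 hT), kv_ky hv]

lemma SUM1 (F : ℕ → ℕ) :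
    ∑ x ∈ range (dK M), F (Nat.nth (Kp M) x)
      = ∑ u ∈ (range (2 * m + 1)).filter (Kp M), F u := by
  refine Finset.sum_nbij' (fun x => Nat.nth (Kp M) x) (fun u => Nat.count (Kp M) u)
    ?_ ?_ ?_ ?_ ?_
  · intro x hx
    rw [Finset.mem_range] at hx
    rw [Finset.mem_filter, Finset.mem_range]
    exact ⟨Kp_lt M (nthK_mem M hx), nthK_mem M hx⟩
  · intro u hu
    rw [Finset.mem_filter] at hu
    rw [Finset.mem_range]
    exact countK_lt M hu.2
  · intro x hx
    rw [Finset.mem_range] at hx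
    exact count_nthK M hx
  · intro u hu
    rw [Finset.mem_filter] at hu
    exact Nat.nth_count hu.2
  · intro x _
    rfl

/-- hypotheses extracted from `SMset` membership, in extended form -/
structure SMH {m : ℕ} (M : Mat (2 * m + 1)) : Prop where
  hUTe : ∀ r v : ℕ, v < r → ext M r v = 0
  hSTe : ∀ r v : ℕ, 2 * m < r + v → ext M r v = 0
  ha : ∀ v : ℕ, v < m → cNZ M v
  hbb : ∀ a : ℕ, a < m → rNZ M a ∨ cNZ M (2 * m - a)

variable {M}

lemma SMH.hrow0 (H : SMH M) : ∀ r v : ℕ, m < r → ext M r v = 0 := by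
  intro r v hr
  by_contra h
  have h1 : ¬ (v < r) := fun hh => h (H.hUTe r v hh)
  exact h (H.hSTe r v (by omega))

lemma SMH.colT (H : SMH M) {r v : ℕ} (h : ¬ (v ≤ m ∨ cNZ M v)) : ext M r v = 0 := by
  push_neg at h
  by_contra hh
  exact h.2 ⟨r, hh⟩

/-- the inverse of `rowfn` on rows `≤ m` -/
def slot (M : Mat (2 * m + 1)) (r : ℕ) : ℕ :=
  if r < m ∧ ¬ cNZ M (2 * m - r) then r else 2 * m - r

lemma rowfn_eq (v : ℕ) :
    rowfn M v = if cNZ M (2 * m - v) then 2 * m - v else v := by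
  unfold rowfn; rw [half_odd]

lemma SMH.slot_spec (H : SMH M) {r : ℕ} (hr : r ≤ m) :
    rowfn M (slot M r) = r ∧ (slot M r ≤ m ∨ cNZ M (slot M r)) ∧ slot M r ≤ 2 * m := by
  unfold slot
  rcases Nat.lt_or_ge r m with hrm | hrm
  · by_cases hc : cNZ M (2 * m - r)
    · rw [if_neg (fun hh => hh.2 hc), rowfn_eq,
        show 2 * m - (2 * m - r) = r by omega, if_pos (H.ha r hrm)]
      exact ⟨rfl, Or.inr hc, by omega⟩
    · rw [if_pos ⟨hrm, hc⟩, rowfn_eq, if_neg hc]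
      exact ⟨rfl, Or.inl hr, by omega⟩
  · have hno : ¬ (r < m ∧ ¬ cNZ M (2 * m - r)) := fun hh => by omega
    rw [if_neg hno, rowfn_eq, show 2 * m - (2 * m - r) = r by omega,
      show 2 * m - r = r by omega, ite_self]
    exact ⟨rfl, Or.inl hr, by omega⟩

lemma SMH.slot_rowfn (H : SMH M) {v : ℕ} (hv : v ≤ 2 * m) (hT : v ≤ m ∨ cNZ M v)
    (hrf : rowfn M v ≤ m) : slot M (rowfn M v) = v := by
  rw [rowfn_eq] at hrf ⊢
  unfold slot
  split_ifs at hrf ⊢ with h1 h2 h3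
  · have hvm : m ≤ v := by omega
    rw [show 2 * m - (2 * m - v) = v by omega] at h2
    rcases hT with hT | hT
    · omega
    · exact absurd hT h2.2
  · omega
  · rfl
  · rcases Nat.lt_or_ge v m with hvm | hvm
    · exact absurd h1 (not_and.mp h3 hvm)
    · rcases Nat.lt_or_ge m v with hmv | hmv
      · exact absurd (H.ha (2 * m - v) (by omega)) h1
      · omega

lemma SUMrow (H : SMH M) (F : ℕ → ℕ) (hF : ∀ r, m < r → F r = 0) :
    ∑ u ∈ (range (2 * m + 1)).filter (Kp M), F (rowfn M (kv m u))
      = ∑ r ∈ range (m + 1), F r := by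
  rw [← Finset.sum_filter_of_ne
    (p := fun u => rowfn M (kv m u) ≤ m)
    (fun u hu h => by
      show rowfn M (kv m u) ≤ m
      by_contra hc
      push_neg at hc
      exact h (hF _ hc))]
  rw [Finset.filter_filter]
  refine Finset.sum_nbij' (fun u => rowfn M (kv m u)) (fun r => ky m (slot M r))
    ?_ ?_ ?_ ?_ ?_
  · intro u hu
    simp only [Finset.mem_filter, Finset.mem_range] at hu
    simp only [Finset.mem_range]
    omega
  · intro r hr
    simp only [Finset.mem_range] at hr
    have hr' : r ≤ m := by omega
    obtain ⟨h1, h2, h3⟩ := H.slot_spec hr'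
    have hky := ky_le (m := m) h3
    simp only [Finset.mem_filter, Finset.mem_range]
    refine ⟨by omega, (Kp_ky M h3).2 h2, ?_⟩
    rw [kv_ky h3, h1]
    exact hr'
  · intro u hu
    simp only [Finset.mem_filter, Finset.mem_range] at hu
    have hu2m : u ≤ 2 * m := by omega
    have hkv := kv_le (m := m) hu2m
    have hT : kv m u ≤ m ∨ cNZ M (kv m u) := ((Kp_def M u).1 hu.2.1).2
    show ky m (slot M (rowfn M (kv m u))) = u
    rw [H.slot_rowfn hkv hT hu.2.2, ky_kv hu2m]
  · intro r hr
    simp only [Finset.mem_range] at hr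
    have hr' : r ≤ m := by omega
    obtain ⟨h1, h2, h3⟩ := H.slot_spec hr'
    show rowfn M (kv m (ky m (slot M r))) = r
    rw [kv_ky h3, h1]
  · intro u _
    rfl

lemma SUMcol (H : SMH M) (F : ℕ → ℕ) (hF : ∀ v, v ≤ 2 * m → m < v → ¬ cNZ M v → F v = 0) :
    ∑ u ∈ (range (2 * m + 1)).filter (Kp M), F (kv m u)
      = ∑ v ∈ range (2 * m + 1), F v := by
  conv_rhs => rw [← Finset.sum_filter_of_ne
    (p := fun v => v ≤ m ∨ cNZ M v)
    (fun v hv h => by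
      have hv' : v < 2 * m + 1 := Finset.mem_range.mp hv
      show v ≤ m ∨ cNZ M v
      by_contra hc
      push_neg at hc
      exact h (hF v (by omega) (by omega) hc.2))]
  refine Finset.sum_nbij' (fun u => kv m u) (fun v => ky m v) ?_ ?_ ?_ ?_ ?_
  · intro u hu
    simp only [Finset.mem_filter, Finset.mem_range] at hu
    have hu2m : u ≤ 2 * m := by omega
    have hkv := kv_le (m := m) hu2m
    simp only [Finset.mem_filter, Finset.mem_range]
    exact ⟨by omega, ((Kp_def M u).1 hu.2).2⟩
  · intro v hv
    simp only [Finset.mem_filter, Finset.mem_range] at hv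
    have hv2m : v ≤ 2 * m := by omega
    have hky := ky_le (m := m) hv2m
    simp only [Finset.mem_filter, Finset.mem_range]
    exact ⟨by omega, (Kp_ky M hv2m).2 hv.2⟩
  · intro u hu
    simp only [Finset.mem_filter, Finset.mem_range] at hu
    show ky m (kv m u) = u
    exact ky_kv (by omega)
  · intro v hv
    simp only [Finset.mem_filter, Finset.mem_range] at hv
    show kv m (ky m v) = v
    exact kv_ky (by omega)
  · intro u _
    rfl

variable (M)

lemma vOf_eq (y : ℕ) : vOf M y = kv m (Nat.nth (Kp M) y) := by
  unfold vOf; rw [half_odd]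

lemma phiM_ext {x y : ℕ} (hx : x < dK M) (hy : y < dK M) :
    ext (phiM M) x y = ext M (rowfn M (vOf M y)) (vOf M x) := by
  unfold ext phiM
  rw [dif_pos ⟨hx, hy⟩]
  rfl

lemma dK_pos : 0 < dK M := by
  have := countK_lt M (Kp_zero M)
  rwa [Nat.count_zero] at this

lemma vOf_zero : vOf M 0 = m := by
  rw [vOf_eq, Nat.nth_zero_of_zero (Kp_zero M)]
  unfold kv; simp

lemma rowfn_m : rowfn M m = m := by
  rw [rowfn_eq, show 2 * m - m = m by omega, ite_self]

lemma count_ky_vOf {x : ℕ} (hx : x < dK M) :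
    Nat.count (Kp M) (ky m (vOf M x)) = x := by
  rw [ky_vOf M hx]
  exact count_nthK M hx

variable {M}

lemma phi_UT (H : SMH M) : UT (phiM M) := by
  intro x y hyx
  by_contra h0
  have h0' : ext M (rowfn M (vOf M y)) (vOf M x) ≠ 0 := by
    intro hh
    exact h0 (by unfold phiM; exact hh)
  have hx := x.isLt
  have hy := y.isLt
  have hvle := vOf_le M hx
  have hwle := vOf_le M hy
  have hvT := vOf_mem M hx
  set v := vOf M x with hvdef
  set w := vOf M y with hwdef
  have h1 : rowfn M w ≤ v := by
    by_contra hh; push_neg at hh; exact h0' (H.hUTe _ _ hh)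
  have h2 : rowfn M w + v ≤ 2 * m := by
    by_contra hh; push_neg at hh; exact h0' (H.hSTe _ _ hh)
  have key : ky m v < ky m w ∨ v = w := by
    rw [rowfn_eq] at h1 h2
    by_cases hcw : cNZ M (2 * m - w)
    · rw [if_pos hcw] at h1 h2
      rcases Nat.eq_or_lt_of_le (show v ≤ w by omega) with he | hlt
      · exact Or.inr he
      · left; unfold ky; split_ifs <;> omega
    · rw [if_neg hcw] at h1 h2
      rcases Nat.eq_or_lt_of_le h1 with he | hlt
      · exact Or.inr he.symm
      · -- w < v, v + w ≤ 2m
        have hne : v ≠ 2 * m - w := by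
          intro he
          rcases hvT with hT | hT
          · omega
          · rw [he] at hT; exact hcw hT
        left; unfold ky; split_ifs <;> omega
  have h3 := count_ky_vOf M hx
  have h4 := count_ky_vOf M hy
  rcases key with key | key
  · have hcm := Nat.count_monotone (Kp M) (le_of_lt key)
    rw [show ky m v = ky m (vOf M ↑x) from rfl, show ky m w = ky m (vOf M ↑y) from rfl] at hcm
    rw [h3, h4] at hcm
    omega
  · have key' : ky m (vOf M ↑x) = ky m (vOf M ↑y) := by
      rw [show vOf M ↑x = v from rfl, show vOf M ↑y = w from rfl, key]
    rw [key', h4] at h3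
    omega

lemma phi_rows (H : SMH M) : ∀ x : Fin (dK M), (x : ℕ) ≠ 0 → rowNonzero (phiM M) x := by
  intro x hx0
  have hx := x.isLt
  have hvle := vOf_le M hx
  have hvT := vOf_mem M hx
  have hvm : vOf M x ≠ m := by
    intro he
    apply hx0
    have : ky m (vOf M x) = 0 := by rw [he]; unfold ky; split_ifs <;> omega
    have h2 := count_ky_vOf M hx
    rw [this, Nat.count_zero] at h2
    omega
  have hcv : cNZ M (vOf M x) := by
    rcases hvT with hT | hT
    · exact H.ha _ (by omega)
    · exact hT
  obtain ⟨i, hi⟩ := hcv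
  have him : i ≤ m := by
    by_contra hh
    push_neg at hh
    exact hi (H.hrow0 _ _ hh)
  obtain ⟨hs1, hs2, hs3⟩ := H.slot_spec (M := M) him
  have hKs : Kp M (ky m (slot M i)) := (Kp_ky M hs3).2 hs2
  have hyd : Nat.count (Kp M) (ky m (slot M i)) < dK M := countK_lt M hKs
  refine ⟨⟨Nat.count (Kp M) (ky m (slot M i)), hyd⟩, ?_⟩
  show ext M (rowfn M (vOf M _)) (vOf M x) ≠ 0
  rw [vOf_count M hs3 hs2, hs1]
  exact hi

lemma phi_msize (H : SMH M) : msize (phiM M) = msize M := by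
  rw [msize_eq, msize_eq]
  have step1 : ∀ x ∈ range (dK M), ∑ y ∈ range (dK M), ext (phiM M) x y
      = ∑ r ∈ range (m + 1), ext M r (vOf M x) := by
    intro x hx
    rw [Finset.mem_range] at hx
    have e1 : ∑ y ∈ range (dK M), ext (phiM M) x y
        = ∑ y ∈ range (dK M), (fun u => ext M (rowfn M (kv m u)) (vOf M x)) (Nat.nth (Kp M) y) :=
      Finset.sum_congr rfl (fun y hy => by
        rw [Finset.mem_range] at hy
        rw [phiM_ext M hx hy, vOf_eq])
    exact e1.trans ((SUM1 M _).trans (SUMrow H _ (fun r hr => H.hrow0 _ _ hr)))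
  have step2 : ∀ r ∈ range (m + 1), ∑ x ∈ range (dK M), ext M r (vOf M x)
      = ∑ v ∈ range (2 * m + 1), ext M r v := by
    intro r _
    have e1 : ∑ x ∈ range (dK M), ext M r (vOf M x)
        = ∑ x ∈ range (dK M), (fun u => ext M r (kv m u)) (Nat.nth (Kp M) x) :=
      Finset.sum_congr rfl (fun x hx => by rw [vOf_eq])
    exact e1.trans ((SUM1 M _).trans
      (SUMcol H _ (fun v hv1 hv2 hnc =>
        H.colT (fun hh => hh.elim (fun h1 => absurd h1 (by omega)) hnc))))
  calc ∑ x ∈ range (dK M), ∑ y ∈ range (dK M), ext (phiM M) x y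
      = ∑ x ∈ range (dK M), ∑ r ∈ range (m + 1), ext M r (vOf M x) :=
        Finset.sum_congr rfl step1
    _ = ∑ r ∈ range (m + 1), ∑ x ∈ range (dK M), ext M r (vOf M x) := Finset.sum_comm
    _ = ∑ r ∈ range (m + 1), ∑ v ∈ range (2 * m + 1), ext M r v :=
        Finset.sum_congr rfl step2
    _ = ∑ r ∈ range (2 * m + 1), ∑ v ∈ range (2 * m + 1), ext M r v := by
        refine Finset.sum_subset (fun a ha => by rw [Finset.mem_range] at *; omega) ?_
        intro r _ hr
        rw [Finset.mem_range] at hr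
        exact Finset.sum_eq_zero fun v _ => H.hrow0 _ _ (by omega)

lemma phi_frs (H : SMH M) : firstRowSum (phiM M) = centerColSum M := by
  rw [firstRowSum_eq _ (dK_pos M), centerColSum_eq]
  have e1 : ∑ y ∈ range (dK M), ext (phiM M) 0 y
      = ∑ y ∈ range (dK M), (fun u => ext M (rowfn M (kv m u)) m) (Nat.nth (Kp M) y) :=
    Finset.sum_congr rfl (fun y hy => by
      rw [Finset.mem_range] at hy
      rw [phiM_ext M (dK_pos M) hy, vOf_zero, vOf_eq])
  calc ∑ y ∈ range (dK M), ext (phiM M) 0 y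
      = ∑ r ∈ range (m + 1), ext M r m :=
        e1.trans ((SUM1 M _).trans (SUMrow H _ (fun r hr => H.hrow0 _ _ hr)))
    _ = ∑ r ∈ range (2 * m + 1), ext M r m := by
        refine Finset.sum_subset (fun a ha => by rw [Finset.mem_range] at *; omega) ?_
        intro r _ hr
        rw [Finset.mem_range] at hr
        exact H.hrow0 _ _ (by omega)

lemma vOf_last (H : SMH M) : rowfn M (vOf M (dK M - 1)) = 0 := by
  rcases Nat.eq_zero_or_pos m with hm | hm
  · subst hm
    have h1 : dK M = 1 := by
      have : dK M = Nat.count (Kp M) 1 := rfl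
      rw [this, Nat.count_succ, Nat.count_zero, if_pos (Kp_zero M)]
    rw [h1]
    have h2 := vOf_zero M
    rw [h2, rowfn_eq, ite_self]
  · have hdk : dK M = Nat.count (Kp M) (2 * m) + (if Kp M (2 * m) then 1 else 0) := by
      show Nat.count (Kp M) (2 * m + 1) = _
      rw [Nat.count_succ]
    have hiff := Kp_even M hm le_rfl
    rw [show m + m = 2 * m by omega] at hiff
    by_cases hc : cNZ M (2 * m)
    · have hK2m : Kp M (2 * m) := hiff.2 hc
      have hd1 : dK M - 1 = Nat.count (Kp M) (2 * m) := by rw [hdk, if_pos hK2m]; omega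
      rw [vOf_eq, hd1, Nat.nth_count hK2m]
      have hkv2m : kv m (2 * m) = 2 * m := by unfold kv; split_ifs <;> omega
      rw [hkv2m, rowfn_eq, show 2 * m - 2 * m = 0 by omega, if_pos (H.ha 0 hm)]
    · have hK2m : ¬ Kp M (2 * m) := fun hK => hc (hiff.1 hK)
      have hKodd : Kp M (2 * m - 1) := by
        have := Kp_odd M (show m - 1 < m by omega)
        rwa [show 2 * (m - 1) + 1 = 2 * m - 1 by omega] at this
      have hcnt : Nat.count (Kp M) (2 * m) = Nat.count (Kp M) (2 * m - 1) + 1 := by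
        have hcs := Nat.count_succ (p := Kp M) (2 * m - 1)
        rw [if_pos hKodd, show 2 * m - 1 + 1 = 2 * m by omega] at hcs
        rw [hcs]
      have hd1 : dK M - 1 = Nat.count (Kp M) (2 * m - 1) := by
        rw [hdk, if_neg hK2m, hcnt]
        omega
      rw [vOf_eq, hd1, Nat.nth_count hKodd]
      have hkvodd : kv m (2 * m - 1) = 0 := by unfold kv; split_ifs <;> omega
      rw [hkvodd, rowfn_eq, show 2 * m - 0 = 2 * m by omega, if_neg hc]

lemma phi_lcs (H : SMH M) : lastColSum (phiM M) = firstRowSum M := by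
  rw [lastColSum_eq _ (dK_pos M), firstRowSum_eq M (by omega)]
  have e1 : ∑ x ∈ range (dK M), ext (phiM M) x (dK M - 1)
      = ∑ x ∈ range (dK M), (fun u => ext M 0 (kv m u)) (Nat.nth (Kp M) x) :=
    Finset.sum_congr rfl (fun x hx => by
      rw [Finset.mem_range] at hx
      rw [phiM_ext M hx (by have := dK_pos M; omega), vOf_last H, vOf_eq])
  exact e1.trans ((SUM1 M _).trans
    (SUMcol H _ (fun v hv1 hv2 hnc =>
      H.colT (fun hh => hh.elim (fun h1 => absurd h1 (by omega)) hnc))))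

end OddDim

/-! ### the inverse map ψ -/

def czB {d : ℕ} (B : Mat d) (i : ℕ) : Prop := ∀ x, ext B x i = 0

def pf {d : ℕ} (B : Mat d) : ℕ → ℕ
  | 0 => 1
  | c + 1 => pf B c + if czB B (pf B c) then 2 else 1

def pm {d : ℕ} (B : Mat d) : ℕ := if h : ∃ c, pf B c = d then Nat.find h else 0

def xf {d : ℕ} (B : Mat d) (v : ℕ) : ℕ :=
  if v < pm B then pf B (pm B - 1 - v) else if v = pm B then 0 else pf B (v - pm B) - 1

def yf {d : ℕ} (B : Mat d) (r : ℕ) : ℕ := if r = pm B then 0 else pf B (pm B - r) - 1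

def psiM {d : ℕ} (B : Mat d) : Mat (2 * pm B + 1) := fun r v =>
  if (r : ℕ) ≤ pm B ∧ (r : ℕ) ≤ (v : ℕ) ∧ (v : ℕ) + (r : ℕ) ≤ 2 * pm B ∧
      ((v : ℕ) ≤ pm B ∨ czB B (pf B ((v : ℕ) - pm B - 1)))
    then ext B (xf B (v : ℕ)) (yf B (r : ℕ)) else 0

def psi (A : SMat) : SMat := ⟨2 * pm A.2 + 1, psiM A.2⟩

section Parse

variable {d : ℕ} (B : Mat d)

structure BH {d : ℕ} (B : Mat d) : Prop where
  hUTe : ∀ x y : ℕ, y < x → ext B x y = 0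
  hrows : ∀ x : ℕ, 1 ≤ x → x < d → ∃ y, ext B x y ≠ 0
  hd : 1 ≤ d

lemma pf_zero : pf B 0 = 1 := rfl

lemma pf_succ (c : ℕ) : pf B (c + 1) = pf B c + if czB B (pf B c) then 2 else 1 := rfl

lemma pf_strictMono : StrictMono (pf B) := by
  apply strictMono_nat_of_lt_succ
  intro c
  rw [pf_succ]
  split_ifs <;> omega

lemma pf_one_le (c : ℕ) : 1 ≤ pf B c := by
  have : pf B 0 ≤ pf B c := (pf_strictMono B).monotone (Nat.zero_le c)
  rw [pf_zero] at this
  exact this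

lemma pf_le_iff {c c' : ℕ} : pf B c ≤ pf B c' ↔ c ≤ c' :=
  (pf_strictMono B).le_iff_le

lemma pf_lt_iff {c c' : ℕ} : pf B c < pf B c' ↔ c < c' :=
  (pf_strictMono B).lt_iff_lt

variable {B}

lemma BH.czB_last (H : BH B) (h2 : 2 ≤ d) : ¬ czB B (d - 1) := by
  intro hcz
  obtain ⟨y, hy⟩ := H.hrows (d - 1) (by omega) (by omega)
  rcases Nat.lt_trichotomy y (d - 1) with h | h | h
  · exact hy (H.hUTe _ _ h)
  · rw [h] at hy; exact hy (hcz _)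
  · exact hy (ext_zero B (Or.inr (by omega)))

lemma BH.pf_total (H : BH B) : ∃ c, pf B c = d := by
  suffices hs : ∀ j c, pf B c ≤ d → d - pf B c ≤ j → ∃ c', pf B c' = d by
    exact hs d 0 (by rw [pf_zero]; exact H.hd) (by omega)
  intro j
  induction j with
  | zero => intro c h1 h2; exact ⟨c, by omega⟩
  | succ j ih =>
    intro c h1 h2
    rcases Nat.eq_or_lt_of_le h1 with he | hlt
    · exact ⟨c, he⟩
    · have hnext : pf B (c + 1) ≤ d := by
        rw [pf_succ]
        split_ifs with hcz
        · -- czB B (pf B c) : then pf B c ≠ d - 1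
          rcases Nat.lt_or_ge (pf B c) (d - 1) with hh | hh
          · omega
          · have : pf B c = d - 1 := by omega
            rw [this] at hcz
            exact absurd hcz (H.czB_last (by have := pf_one_le B c; omega))
        · omega
      refine ih (c + 1) hnext ?_
      have := pf_strictMono B (show c < c + 1 by omega)
      omega

lemma BH.pf_pm (H : BH B) : pf B (pm B) = d := by
  unfold pm
  rw [dif_pos H.pf_total]
  exact Nat.find_spec H.pf_total

lemma BH.pm_unique (H : BH B) {c : ℕ} (h : pf B c = d) : c = pm B :=
  (pf_strictMono B).injective (by rw [h, H.pf_pm])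

lemma BH.pf_lt_d (H : BH B) {c : ℕ} (hc : c < pm B) : pf B c < d := by
  have h1 := H.pf_pm
  have h2 := pf_strictMono B hc
  omega

lemma BH.pm_block (H : BH B) {X : ℕ} (h1 : 1 ≤ X) (h2 : X < d) :
    ∃ c, c < pm B ∧ (X = pf B c ∨ (X = pf B c + 1 ∧ czB B (pf B c))) := by
  set m := pm B with hm
  set P := fun c => pf B c ≤ X with hP
  have hP0 : P 0 := by rw [hP]; show pf B 0 ≤ X; rw [pf_zero]; exact h1
  set fg := Nat.findGreatest P m with hfg
  have hfg_le : fg ≤ m := Nat.findGreatest_le m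
  have hPfg : P fg := Nat.findGreatest_spec (Nat.zero_le m) hP0
  have hfg_lt : fg < m := by
    rcases Nat.eq_or_lt_of_le hfg_le with he | hlt
    · exfalso
      have hthis : pf B fg ≤ X := hPfg
      rw [he, hm, H.pf_pm] at hthis
      omega
    · exact hlt
  have hgt : ¬ P (fg + 1) :=
    Nat.findGreatest_is_greatest (Nat.lt_succ_self fg) (by omega)
  have hXlt : X < pf B (fg + 1) := by
    by_contra hh
    push_neg at hh
    exact hgt hh
  have hXge : pf B fg ≤ X := hPfg
  refine ⟨fg, hfg_lt, ?_⟩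
  rw [pf_succ] at hXlt
  split_ifs at hXlt with hcz
  · rcases Nat.eq_or_lt_of_le hXge with he | hlt2
    · exact Or.inl he.symm
    · exact Or.inr ⟨by omega, hcz⟩
  · exact Or.inl (by omega)

lemma xf_m : xf B (pm B) = 0 := by
  unfold xf
  rw [if_neg (by omega), if_pos rfl]

lemma xf_lo {v : ℕ} (hv : v < pm B) : xf B v = pf B (pm B - 1 - v) := by
  unfold xf
  rw [if_pos hv]

lemma xf_hi {v : ℕ} (hv : pm B < v) : xf B v = pf B (v - pm B) - 1 := by
  unfold xf
  rw [if_neg (by omega), if_neg (by omega)]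

lemma yf_m : yf B (pm B) = 0 := by unfold yf; rw [if_pos rfl]

lemma yf_lo {r : ℕ} (hr : r < pm B) : yf B r = pf B (pm B - r) - 1 := by
  unfold yf
  rw [if_neg (by omega)]

lemma BH.yf_lt_d (H : BH B) {r : ℕ} (hr : r ≤ pm B) : yf B r < d := by
  rcases Nat.eq_or_lt_of_le hr with he | hlt
  · rw [he, yf_m]; exact H.hd
  · rw [yf_lo hlt]
    have h1 := pf_one_le B (pm B - r)
    have h2 : pf B (pm B - r) ≤ pf B (pm B) := (pf_le_iff B).2 (by omega)
    rw [H.pf_pm] at h2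
    omega

lemma BH.xf_lt_d (H : BH B) {v : ℕ} (hv : v ≤ 2 * pm B) : xf B v < d := by
  rcases Nat.lt_trichotomy v (pm B) with h | h | h
  · rw [xf_lo h]
    have := (pf_lt_iff B (c := pm B - 1 - v) (c' := pm B)).2 (by omega)
    rw [H.pf_pm] at this
    exact this
  · rw [h, xf_m]; exact H.hd
  · rw [xf_hi h]
    have h1 := pf_one_le B (v - pm B)
    have h2 : pf B (v - pm B) ≤ pf B (pm B) := (pf_le_iff B).2 (by omega)
    rw [H.pf_pm] at h2
    omega

/-- region zero: cells outside the triangular region correspond to zero cells of B -/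
lemma BH.RZ (H : BH B) {r v : ℕ} (hr : r ≤ pm B) (hbad : v < r ∨ 2 * pm B < v + r) :
    ext B (xf B v) (yf B r) = 0 := by
  rcases hbad with hbad | hbad
  · have hvm : v < (pm B) := by omega
    rw [xf_lo hvm]
    rcases Nat.eq_or_lt_of_le hr with he | hlt
    · rw [he, yf_m]
      exact H.hUTe _ _ (pf_one_le B _)
    · rw [yf_lo hlt]
      refine H.hUTe _ _ ?_
      have h1 : pf B ((pm B) - r) ≤ pf B ((pm B) - 1 - v) := (pf_le_iff B).2 (by omega)
      have h2 := pf_one_le B ((pm B) - r)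
      omega
  · have hvm : (pm B) < v := by omega
    rw [xf_hi hvm]
    rcases Nat.eq_or_lt_of_le hr with he | hlt
    · rw [he, yf_m]
      refine H.hUTe _ _ ?_
      have h1 : pf B 1 ≤ pf B (v - (pm B)) := (pf_le_iff B).2 (by omega)
      have h2 : pf B 1 = 1 + if czB B 1 then 2 else 1 := by
        rw [show (1:ℕ) = 0 + 1 from rfl, pf_succ, pf_zero]
      split_ifs at h2 <;> omega
    · rw [yf_lo hlt]
      refine H.hUTe _ _ ?_
      have h1 : pf B ((pm B) - r) < pf B (v - (pm B)) := (pf_lt_iff B).2 (by omega)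
      have h2 := pf_one_le B ((pm B) - r)
      omega

/-- columns of B outside the image of yf are zero columns -/
lemma BH.CZ (H : BH B) {Y : ℕ} (hY : Y < d) (hnot : ∀ r, r ≤ pm B → yf B r ≠ Y) :
    czB B Y := by
  have hY1 : 1 ≤ Y := by
    rcases Nat.eq_zero_or_pos Y with h0 | h1
    · exfalso; exact hnot (pm B) le_rfl (by rw [yf_m, h0])
    · exact h1
  obtain ⟨c, hc, hcase⟩ := H.pm_block hY1 hY
  have hkey : yf B ((pm B) - c - 1) = pf B (c + 1) - 1 := by
    rw [yf_lo (show (pm B) - c - 1 < (pm B) by omega)]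
    congr 2
    omega
  rcases hcase with he | ⟨he, hcz⟩
  · by_cases hcz : czB B (pf B c)
    · rw [he]; exact hcz
    · exfalso
      refine hnot ((pm B) - c - 1) (by omega) ?_
      rw [hkey, pf_succ, if_neg hcz, he]
      omega
  · exfalso
    refine hnot ((pm B) - c - 1) (by omega) ?_
    rw [hkey, pf_succ, if_pos hcz, he]
    omega

/-- every row index of B is in the image of xf -/
lemma BH.XV (H : BH B) {X : ℕ} (hX : X < d) :
    ∃ v, v ≤ 2 * pm B ∧ xf B v = X ∧ (v ≤ pm B ∨ czB B (pf B (v - pm B - 1))) := by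
  rcases Nat.eq_zero_or_pos X with h0 | h1
  · exact ⟨(pm B), by omega, by rw [h0, xf_m], Or.inl le_rfl⟩
  · obtain ⟨c, hc, hcase⟩ := H.pm_block h1 hX
    rcases hcase with he | ⟨he, hcz⟩
    · refine ⟨(pm B) - 1 - c, by omega, ?_, Or.inl (by omega)⟩
      rw [xf_lo (show (pm B) - 1 - c < (pm B) by omega), he]
      congr 1
      omega
    · refine ⟨(pm B) + 1 + c, by omega, ?_, Or.inr ?_⟩
      · rw [xf_hi (show (pm B) < (pm B) + 1 + c by omega), show (pm B) + 1 + c - (pm B) = c + 1 by omega,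
          pf_succ, if_pos hcz, he]
        omega
      · rw [show (pm B) + 1 + c - (pm B) - 1 = c by omega]
        exact hcz

/-- xf is injective on the valid column set -/
lemma xf_inj {v1 v2 : ℕ}
    (h1 : v1 ≤ 2 * pm B ∧ (v1 ≤ pm B ∨ czB B (pf B (v1 - pm B - 1))))
    (h2 : v2 ≤ 2 * pm B ∧ (v2 ≤ pm B ∨ czB B (pf B (v2 - pm B - 1))))
    (he : xf B v1 = xf B v2) : v1 = v2 := by
  have hC : ∀ v : ℕ, (pm B) < v → v ≤ 2 * (pm B) → czB B (pf B (v - (pm B) - 1)) →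
      xf B v = pf B (v - (pm B) - 1) + 1 := by
    intro v hv1 hv2 hcz
    have hstep := pf_succ B (v - pm B - 1)
    rw [if_pos hcz, show v - pm B - 1 + 1 = v - pm B by omega] at hstep
    rw [xf_hi hv1, hstep]
    omega
  rcases Nat.lt_trichotomy v1 (pm B) with hv1 | hv1 | hv1 <;>
    rcases Nat.lt_trichotomy v2 (pm B) with hv2 | hv2 | hv2
  · rw [xf_lo hv1, xf_lo hv2] at he
    have := (pf_strictMono B).injective he
    omega
  · rw [xf_lo hv1, hv2, xf_m] at he
    have := pf_one_le B ((pm B) - 1 - v1)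
    omega
  · have hcz2 := h2.2.resolve_left (by omega)
    rw [xf_lo hv1, hC v2 hv2 h2.1 hcz2] at he
    -- pf ((pm B)-1-v1) = pf c + 1 where czB (pf c), c := v2 - (pm B) - 1
    exfalso
    have hcz2' : pf B (v2 - (pm B) - 1 + 1) = pf B (v2 - (pm B) - 1) + 2 := by
      rw [pf_succ, if_pos hcz2]
    rcases Nat.lt_or_ge ((pm B) - 1 - v1) (v2 - (pm B) - 1 + 1) with hh | hh
    · have := (pf_le_iff B).2 (show (pm B) - 1 - v1 ≤ v2 - (pm B) - 1 by omega)
      omega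
    · have := (pf_le_iff B).2 hh
      omega
  · rw [hv1, xf_m, xf_lo hv2] at he
    have := pf_one_le B ((pm B) - 1 - v2)
    omega
  · omega
  · have hcz2 := h2.2.resolve_left (by omega)
    rw [hv1, xf_m, hC v2 hv2 h2.1 hcz2] at he
    omega
  · have hcz1 := h1.2.resolve_left (by omega)
    rw [xf_lo hv2, hC v1 hv1 h1.1 hcz1] at he
    exfalso
    have hcz1' : pf B (v1 - (pm B) - 1 + 1) = pf B (v1 - (pm B) - 1) + 2 := by
      rw [pf_succ, if_pos hcz1]
    rcases Nat.lt_or_ge ((pm B) - 1 - v2) (v1 - (pm B) - 1 + 1) with hh | hh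
    · have := (pf_le_iff B).2 (show (pm B) - 1 - v2 ≤ v1 - (pm B) - 1 by omega)
      omega
    · have := (pf_le_iff B).2 hh
      omega
  · have hcz1 := h1.2.resolve_left (by omega)
    rw [hv2, xf_m, hC v1 hv1 h1.1 hcz1] at he
    omega
  · have hcz1 := h1.2.resolve_left (by omega)
    have hcz2 := h2.2.resolve_left (by omega)
    rw [xf_hi hv1, xf_hi hv2] at he
    have e1 := pf_one_le B (v1 - (pm B))
    have e2 := pf_one_le B (v2 - (pm B))
    have : pf B (v1 - (pm B)) = pf B (v2 - (pm B)) := by omega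
    have := (pf_strictMono B).injective this
    omega

/-- yf is injective on [0, pm B] -/
lemma yf_inj {r1 r2 : ℕ} (h1 : r1 ≤ pm B) (h2 : r2 ≤ pm B)
    (he : yf B r1 = yf B r2) : r1 = r2 := by
  rcases Nat.eq_or_lt_of_le h1 with e1 | l1 <;> rcases Nat.eq_or_lt_of_le h2 with e2 | l2
  · omega
  · rw [e1, yf_m, yf_lo l2] at he
    have := pf_one_le B ((pm B) - r2)
    have h3 : pf B 1 ≤ pf B ((pm B) - r2) := (pf_le_iff B).2 (by omega)
    have h4 : pf B 1 = 1 + if czB B 1 then 2 else 1 := by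
      rw [show (1:ℕ) = 0 + 1 from rfl, pf_succ, pf_zero]
    split_ifs at h4 <;> omega
  · rw [e2, yf_m, yf_lo l1] at he
    have := pf_one_le B ((pm B) - r1)
    have h3 : pf B 1 ≤ pf B ((pm B) - r1) := (pf_le_iff B).2 (by omega)
    have h4 : pf B 1 = 1 + if czB B 1 then 2 else 1 := by
      rw [show (1:ℕ) = 0 + 1 from rfl, pf_succ, pf_zero]
    split_ifs at h4 <;> omega
  · rw [yf_lo l1, yf_lo l2] at he
    have e1 := pf_one_le B ((pm B) - r1)
    have e2 := pf_one_le B ((pm B) - r2)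
    have : pf B ((pm B) - r1) = pf B ((pm B) - r2) := by omega
    have := (pf_strictMono B).injective this
    omega

lemma psiM_ext (r v : ℕ) :
    ext (psiM B) r v = if (r ≤ pm B ∧ r ≤ v ∧ v + r ≤ 2 * pm B ∧
      (v ≤ pm B ∨ czB B (pf B (v - pm B - 1)))) then ext B (xf B v) (yf B r) else 0 := by
  unfold ext
  split
  · next hh =>
      show psiM B ⟨r, hh.1⟩ ⟨v, hh.2⟩ = _
      unfold psiM
      rfl
  · next hh =>
      rw [if_neg]
      intro hc
      exact hh ⟨by omega, by omega⟩

lemma psi_row0 {r v : ℕ} (hr : pm B < r) : ext (psiM B) r v = 0 := by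
  rw [psiM_ext]
  exact if_neg (fun hc => by omega)

lemma psi_colz {v : ℕ} (hv : pm B < v) (hcz : ¬ czB B (pf B (v - pm B - 1))) {r : ℕ} :
    ext (psiM B) r v = 0 := by
  rw [psiM_ext]
  refine if_neg (fun hc => ?_)
  rcases hc.2.2.2 with h | h
  · omega
  · exact hcz h

lemma BH.cell_eq (H : BH B) {r v : ℕ} (hr : r ≤ pm B) (hv : v ≤ 2 * pm B)
    (hval : v ≤ pm B ∨ czB B (pf B (v - pm B - 1))) :
    ext (psiM B) r v = ext B (xf B v) (yf B r) := by
  rw [psiM_ext]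
  by_cases hreg : r ≤ v ∧ v + r ≤ 2 * pm B
  · rw [if_pos ⟨hr, hreg.1, hreg.2, hval⟩]
  · rw [if_neg (fun hc => hreg ⟨hc.2.1, hc.2.2.1⟩)]
    exact (H.RZ hr (by omega)).symm

lemma psi_ST : SuperTri (psiM B) := by
  constructor
  · intro i j hji
    show (if _ then _ else _) = 0
    exact if_neg (fun hc => by omega)
  · intro i j hij
    show (if _ then _ else _) = 0
    exact if_neg (fun hc => by omega)

lemma not_czB_exists {i : ℕ} (h : ¬ czB B i) : ∃ x, x < d ∧ ext B x i ≠ 0 := by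
  unfold czB at h
  push_neg at h
  obtain ⟨x, hx⟩ := h
  refine ⟨x, ?_, hx⟩
  by_contra hh
  push_neg at hh
  exact hx (ext_zero B (Or.inl hh))

lemma BH.row_hit (H : BH B) {X : ℕ} (h1 : 1 ≤ X) (h2 : X < d) :
    ∃ r, r ≤ pm B ∧ ext B X (yf B r) ≠ 0 := by
  obtain ⟨y, hy⟩ := H.hrows X h1 h2
  have hyd : y < d := by
    by_contra hh
    push_neg at hh
    exact hy (ext_zero B (Or.inr hh))
  have hncz : ¬ czB B y := fun hcz => hy (hcz X)
  have hex : ¬ ∀ r, r ≤ pm B → yf B r ≠ y := fun hall => hncz (H.CZ hyd hall)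
  push_neg at hex
  obtain ⟨r, hr, hyr⟩ := hex
  exact ⟨r, hr, by rw [hyr]; exact hy⟩

lemma BH.psi_a (H : BH B) : ∀ j : Fin (2 * pm B + 1), (j : ℕ) < pm B →
    colNonzero (psiM B) j := by
  intro j hj
  set v := (j : ℕ) with hv
  have hX1 : 1 ≤ xf B v := by rw [xf_lo hj]; exact pf_one_le B _
  have hXd : xf B v < d := H.xf_lt_d (by omega)
  obtain ⟨r, hr, hne⟩ := H.row_hit hX1 hXd
  have hreg : r ≤ v ∧ v + r ≤ 2 * pm B := by
    by_contra hh
    push_neg at hh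
    rcases Nat.lt_or_ge v r with h | h
    · exact hne (H.RZ hr (Or.inl h))
    · exact hne (H.RZ hr (Or.inr (by omega)))
  refine ⟨⟨r, by omega⟩, ?_⟩
  have : ext (psiM B) r v ≠ 0 := by
    rw [H.cell_eq hr (by omega) (Or.inl (by omega))]
    exact hne
  have he : ext (psiM B) r v = psiM B ⟨r, by omega⟩ j := ext_apply (psiM B) ⟨r, by omega⟩ j
  rw [he] at this
  exact this

lemma BH.psi_b (H : BH B) : ∀ a b : Fin (2 * pm B + 1), (a : ℕ) < pm B →
    (a : ℕ) + (b : ℕ) = 2 * pm B →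
    rowNonzero (psiM B) a ∨ colNonzero (psiM B) b := by
  intro a b ha hab
  set c := pm B - 1 - (a : ℕ) with hc
  by_cases hcz : czB B (pf B c)
  · -- column b is nonzero
    right
    have hbv : (b : ℕ) = pm B + 1 + c := by omega
    have hstep : pf B (c + 1) = pf B c + 2 := by rw [pf_succ, if_pos hcz]
    have hxfb : xf B (b : ℕ) = pf B c + 1 := by
      rw [xf_hi (by omega), show (b : ℕ) - pm B = c + 1 by omega, hstep]
      omega
    have hc1d : pf B (c + 1) ≤ d := by
      have := (pf_le_iff B (c := c + 1) (c' := pm B)).2 (by omega)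
      rw [H.pf_pm] at this
      exact this
    have hX1 : 1 ≤ xf B (b : ℕ) := by rw [hxfb]; omega
    have hXd : xf B (b : ℕ) < d := by rw [hxfb]; omega
    obtain ⟨r, hr, hne⟩ := H.row_hit hX1 hXd
    have hreg : r ≤ (b : ℕ) ∧ (b : ℕ) + r ≤ 2 * pm B := by
      by_contra hh
      push_neg at hh
      rcases Nat.lt_or_ge (b : ℕ) r with h | h
      · exact hne (H.RZ hr (Or.inl h))
      · exact hne (H.RZ hr (Or.inr (by omega)))
    refine ⟨⟨r, by omega⟩, ?_⟩
    have : ext (psiM B) r b ≠ 0 := by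
      rw [H.cell_eq hr (by omega) (Or.inr (by rw [show (b:ℕ) - pm B - 1 = c by omega]; exact hcz))]
      exact hne
    have he : ext (psiM B) r (b : ℕ) = psiM B ⟨r, by omega⟩ b := ext_apply (psiM B) ⟨r, by omega⟩ b
    rw [he] at this
    exact this
  · -- row a is nonzero
    left
    have hyfa : yf B (a : ℕ) = pf B c := by
      rw [yf_lo ha, show pm B - (a : ℕ) = c + 1 by omega, pf_succ, if_neg hcz]
      omega
    obtain ⟨X, hXd, hne⟩ := not_czB_exists hcz
    obtain ⟨v, hv2m, hxv, hval⟩ := H.XV hXd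
    rw [← hxv, ← hyfa] at hne
    have hreg : (a : ℕ) ≤ v ∧ v + (a : ℕ) ≤ 2 * pm B := by
      by_contra hh
      push_neg at hh
      rcases Nat.lt_or_ge v (a : ℕ) with h | h
      · exact hne (H.RZ (by omega) (Or.inl h))
      · exact hne (H.RZ (by omega) (Or.inr (by omega)))
    refine ⟨⟨v, by omega⟩, ?_⟩
    have : ext (psiM B) (a : ℕ) v ≠ 0 := by
      rw [H.cell_eq (by omega) hv2m hval]
      exact hne
    have he : ext (psiM B) (a : ℕ) v = psiM B a ⟨v, by omega⟩ := ext_apply (psiM B) a ⟨v, by omega⟩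
    rw [he] at this
    exact this

/-- the valid column set -/
def Vf {d : ℕ} (B : Mat d) : Finset ℕ :=
  (range (2 * pm B + 1)).filter (fun v => v ≤ pm B ∨ czB B (pf B (v - pm B - 1)))

lemma BH.SUMX (H : BH B) (F : ℕ → ℕ) :
    ∑ v ∈ Vf B, F (xf B v) = ∑ X ∈ range d, F X := by
  have himg : (Vf B).image (xf B) = range d := by
    ext X
    simp only [Finset.mem_image, Finset.mem_range, Vf, Finset.mem_filter]
    constructor
    · rintro ⟨v, ⟨hv1, hv2⟩, rfl⟩
      exact H.xf_lt_d (by omega)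
    · intro hX
      obtain ⟨v, hv1, hv2, hv3⟩ := H.XV hX
      exact ⟨v, ⟨by omega, hv3⟩, hv2⟩
  rw [← himg]
  refine (Finset.sum_image ?_).symm
  intro v1 hv1 v2 hv2 he
  simp only [Vf, Finset.mem_coe, Finset.mem_filter, Finset.mem_range] at hv1 hv2
  exact xf_inj ⟨by omega, hv1.2⟩ ⟨by omega, hv2.2⟩ he

lemma BH.SUMY (H : BH B) (F : ℕ → ℕ) (hF : ∀ Y, Y < d → czB B Y → F Y = 0) :
    ∑ r ∈ range (pm B + 1), F (yf B r) = ∑ Y ∈ range d, F Y := by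
  have hsub : (range (pm B + 1)).image (yf B) ⊆ range d := by
    intro Y hY
    simp only [Finset.mem_image, Finset.mem_range] at hY
    obtain ⟨r, hr, rfl⟩ := hY
    exact Finset.mem_range.2 (H.yf_lt_d (by omega))
  have h1 : ∑ r ∈ range (pm B + 1), F (yf B r)
      = ∑ Y ∈ (range (pm B + 1)).image (yf B), F Y :=
    (Finset.sum_image (fun r1 h1 r2 h2 he =>
      yf_inj (by rw [Finset.mem_coe, Finset.mem_range] at h1; omega)
        (by rw [Finset.mem_coe, Finset.mem_range] at h2; omega) he)).symm
  rw [h1]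
  refine Finset.sum_subset hsub ?_
  intro Y hYd hYnot
  rw [Finset.mem_range] at hYd
  refine hF Y hYd (H.CZ hYd ?_)
  intro r hr hyr
  exact hYnot (Finset.mem_image.2 ⟨r, Finset.mem_range.2 (by omega), hyr⟩)

lemma BH.psi_msize (H : BH B) : msize (psiM B) = msize B := by
  rw [msize_eq, msize_eq]
  have step0 : ∀ r ∈ range (2 * pm B + 1), ∑ v ∈ range (2 * pm B + 1), ext (psiM B) r v
      = ∑ v ∈ range (2 * pm B + 1), if v ∈ Vf B then ext (psiM B) r v else 0 := by
    intro r _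
    refine Finset.sum_congr rfl (fun v hv => ?_)
    by_cases hmem : v ∈ Vf B
    · rw [if_pos hmem]
    · rw [if_neg hmem]
      simp only [Vf, Finset.mem_filter] at hmem
      push_neg at hmem
      have := hmem hv
      rcases Nat.lt_or_ge (pm B) v with h | h
      · exact psi_colz h (by tauto)
      · omega
  calc ∑ r ∈ range (2 * pm B + 1), ∑ v ∈ range (2 * pm B + 1), ext (psiM B) r v
      = ∑ r ∈ range (2 * pm B + 1), ∑ v ∈ Vf B, ext (psiM B) r v := by
        refine Finset.sum_congr rfl (fun r hr => ?_)
        rw [step0 r hr, Finset.sum_ite_mem, Finset.inter_eq_right.2 ?_]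
        intro v hv
        simp only [Vf, Finset.mem_filter] at hv
        exact hv.1
    _ = ∑ r ∈ range (pm B + 1), ∑ v ∈ Vf B, ext (psiM B) r v := by
        symm
        refine Finset.sum_subset (fun a ha => by rw [Finset.mem_range] at *; omega) ?_
        intro r _ hr
        rw [Finset.mem_range] at hr
        exact Finset.sum_eq_zero fun v _ => psi_row0 (by omega)
    _ = ∑ r ∈ range (pm B + 1), ∑ X ∈ range d, ext B X (yf B r) := by
        refine Finset.sum_congr rfl (fun r hr => ?_)
        rw [Finset.mem_range] at hr
        have e1 : ∑ v ∈ Vf B, ext (psiM B) r v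
            = ∑ v ∈ Vf B, (fun X => ext B X (yf B r)) (xf B v) :=
          Finset.sum_congr rfl (fun v hv => by
            simp only [Vf, Finset.mem_filter, Finset.mem_range] at hv
            exact H.cell_eq (by omega) (by omega) hv.2)
        rw [e1]
        exact H.SUMX (fun X => ext B X (yf B r))
    _ = ∑ X ∈ range d, ∑ r ∈ range (pm B + 1), ext B X (yf B r) := Finset.sum_comm
    _ = ∑ X ∈ range d, ∑ Y ∈ range d, ext B X Y := by
        refine Finset.sum_congr rfl (fun X _ => ?_)
        exact H.SUMY (fun Y => ext B X Y) (fun Y hY hcz => hcz X)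

lemma BH.yf_zero (H : BH B) : yf B 0 = d - 1 := by
  rcases Nat.eq_zero_or_pos (pm B) with h0 | h1
  · have := H.pf_pm
    rw [h0, pf_zero] at this
    rw [← h0, yf_m]
    omega
  · rw [yf_lo h1, show pm B - 0 = pm B by omega, H.pf_pm]

lemma BH.psi_frs (H : BH B) : firstRowSum (psiM B) = lastColSum B := by
  rw [firstRowSum_eq _ (by omega), lastColSum_eq _ H.hd]
  calc ∑ v ∈ range (2 * pm B + 1), ext (psiM B) 0 v
      = ∑ v ∈ Vf B, ext (psiM B) 0 v := by
        symm
        refine Finset.sum_subset (fun a ha => by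
          simp only [Vf, Finset.mem_filter] at ha
          exact ha.1) ?_
        intro v hv hnot
        rw [Finset.mem_range] at hv
        by_cases h : pm B < v
        · refine psi_colz h (fun hcz => hnot ?_)
          simp only [Vf, Finset.mem_filter, Finset.mem_range]
          exact ⟨hv, Or.inr hcz⟩
        · exact absurd (by
            simp only [Vf, Finset.mem_filter, Finset.mem_range]
            exact ⟨hv, Or.inl (by omega)⟩) hnot
    _ = ∑ v ∈ Vf B, (fun X => ext B X (d - 1)) (xf B v) := by
        refine Finset.sum_congr rfl (fun v hv => ?_)
        simp only [Vf, Finset.mem_filter, Finset.mem_range] at hv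
        rw [H.cell_eq (by omega) (by omega) hv.2, H.yf_zero]
    _ = ∑ X ∈ range d, ext B X (d - 1) := H.SUMX (fun X => ext B X (d - 1))

lemma BH.psi_ccs (H : BH B) : centerColSum (psiM B) = firstRowSum B := by
  rw [centerColSum_eq, firstRowSum_eq _ H.hd]
  calc ∑ r ∈ range (2 * pm B + 1), ext (psiM B) r (pm B)
      = ∑ r ∈ range (pm B + 1), ext (psiM B) r (pm B) := by
        symm
        refine Finset.sum_subset (fun a ha => by rw [Finset.mem_range] at *; omega) ?_
        intro r _ hr
        rw [Finset.mem_range] at hr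
        exact psi_row0 (by omega)
    _ = ∑ r ∈ range (pm B + 1), (fun Y => ext B 0 Y) (yf B r) := by
        refine Finset.sum_congr rfl (fun r hr => ?_)
        rw [Finset.mem_range] at hr
        rw [H.cell_eq (by omega) (by omega) (Or.inl le_rfl), xf_m]
    _ = ∑ Y ∈ range d, ext B 0 Y := H.SUMY (fun Y => ext B 0 Y) (fun Y hY hcz => hcz 0)

end Parse

/-! ### roundtrip ψ ∘ φ = id -/

section RTC

variable {m : ℕ} {M : Mat (2 * m + 1)}

lemma SMH.bh_phi (H : SMH M) : BH (phiM M) where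
  hUTe := fun x y h => ut_ext (phi_UT H) h
  hrows := fun x h1 h2 => by
    obtain ⟨j, hj⟩ := phi_rows H ⟨x, h2⟩ (by simpa using (by omega : ¬ (x = 0)))
    exact ⟨(j : ℕ), by rw [ext_apply (phiM M) ⟨x, h2⟩ j]; exact hj⟩
  hd := dK_pos M

lemma SMH.czB_phi (H : SMH M) {c : ℕ} (hc : c < m) :
    czB (phiM M) (Nat.count (Kp M) (2 * c + 1)) ↔ cNZ M (m + 1 + c) := by
  have hKodd : Kp M (2 * c + 1) := Kp_odd M hc
  have hYd : Nat.count (Kp M) (2 * c + 1) < dK M := countK_lt M hKodd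
  have hvOfY : vOf M (Nat.count (Kp M) (2 * c + 1)) = m - 1 - c := by
    rw [vOf_eq, Nat.nth_count hKodd]
    unfold kv; split_ifs <;> omega
  have hrowfn : rowfn M (m - 1 - c)
      = if cNZ M (m + 1 + c) then m + 1 + c else m - 1 - c := by
    rw [rowfn_eq, show 2 * m - (m - 1 - c) = m + 1 + c by omega]
  constructor
  · intro hcz
    by_contra hnc
    have hr2 : rowfn M (m - 1 - c) = m - 1 - c := by rw [hrowfn, if_neg hnc]
    have hrnz : rNZ M (m - 1 - c) := by
      rcases H.hbb (m - 1 - c) (by omega) with h | h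
      · exact h
      · rw [show 2 * m - (m - 1 - c) = m + 1 + c by omega] at h
        exact absurd h hnc
    obtain ⟨w, hw⟩ := hrnz
    have hw2m : w ≤ 2 * m := by
      by_contra hh
      push_neg at hh
      exact hw (ext_zero M (Or.inr (by omega)))
    have hwT : w ≤ m ∨ cNZ M w := Or.inr ⟨m - 1 - c, hw⟩
    have hx : Nat.count (Kp M) (ky m w) < dK M := countK_lt M ((Kp_ky M hw2m).2 hwT)
    have := hcz (Nat.count (Kp M) (ky m w))
    rw [phiM_ext M hx hYd, hvOfY, hr2, vOf_count M hw2m hwT] at this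
    exact hw this
  · intro hcv
    intro x
    rcases Nat.lt_or_ge x (dK M) with hx | hx
    · rw [phiM_ext M hx hYd, hvOfY, hrowfn, if_pos hcv]
      exact H.hrow0 _ _ (by omega)
    · exact ext_zero (phiM M) (Or.inl hx)

lemma SMH.pf_phi (H : SMH M) : ∀ c, c ≤ m → pf (phiM M) c = Nat.count (Kp M) (2 * c + 1) := by
  intro c
  induction c with
  | zero =>
    intro _
    rw [pf_zero, show 2 * 0 + 1 = 0 + 1 by omega, Nat.count_succ, Nat.count_zero,
      if_pos (Kp_zero M)]
  | succ c ih =>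
    intro hc1
    have hc : c < m := by omega
    rw [pf_succ, ih (by omega)]
    have e1 : Nat.count (Kp M) (2 * (c + 1) + 1)
        = Nat.count (Kp M) (2 * c + 2) + if Kp M (2 * c + 2) then 1 else 0 := by
      rw [show 2 * (c + 1) + 1 = (2 * c + 2) + 1 by omega, Nat.count_succ]
    have e2 : Nat.count (Kp M) (2 * c + 2)
        = Nat.count (Kp M) (2 * c + 1) + 1 := by
      rw [show 2 * c + 2 = (2 * c + 1) + 1 by omega, Nat.count_succ, if_pos (Kp_odd M hc)]
    have e3 : Kp M (2 * c + 2) ↔ cNZ M (m + 1 + c) := by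
      have := Kp_even M (t := c + 1) (by omega) (by omega)
      rw [show 2 * (c + 1) = 2 * c + 2 by omega, show m + (c + 1) = m + 1 + c by omega] at this
      exact this
    rw [e1, e2]
    have e4 : czB (phiM M) (Nat.count (Kp M) (2 * c + 1)) ↔ Kp M (2 * c + 2) :=
      (H.czB_phi hc).trans e3.symm
    by_cases hcz : Kp M (2 * c + 2)
    · rw [if_pos (e4.2 hcz), if_pos hcz]
    · rw [if_neg (fun hh => hcz (e4.1 hh)), if_neg hcz]

lemma SMH.pm_phi (H : SMH M) : pm (phiM M) = m := by
  symm
  refine H.bh_phi.pm_unique ?_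
  rw [H.pf_phi m le_rfl]
  rfl

/-- xf of phiM M agrees with count ∘ ky on valid columns -/
lemma SMH.xf_phi (H : SMH M) {v : ℕ} (hv : v ≤ 2 * m) (hT : v ≤ m ∨ cNZ M v) :
    xf (phiM M) v = Nat.count (Kp M) (ky m v) := by
  have hpm := H.pm_phi
  rcases Nat.lt_trichotomy v m with h | h | h
  · rw [xf_lo (by omega), show pm (phiM M) - 1 - v = m - 1 - v by omega,
      H.pf_phi (m - 1 - v) (by omega), show 2 * (m - 1 - v) + 1 = ky m v by unfold ky; split_ifs <;> omega]
  · have h0 := xf_m (B := phiM M)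
    rw [hpm] at h0
    rw [h, h0, show ky m m = 0 by unfold ky; split_ifs <;> omega, Nat.count_zero]
  · have hcv : cNZ M v := hT.resolve_left (by omega)
    rw [xf_hi (by omega), show v - pm (phiM M) = v - m by omega,
      H.pf_phi (v - m) (by omega)]
    have hKe : Kp M (2 * (v - m)) := by
      have := (Kp_even M (t := v - m) (by omega) (by omega)).2
        (by rw [show m + (v - m) = v by omega]; exact hcv)
      exact this
    have e1 : Nat.count (Kp M) (2 * (v - m) + 1)
        = Nat.count (Kp M) (2 * (v - m)) + 1 := by
      rw [Nat.count_succ, if_pos hKe]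
    rw [e1, show ky m v = 2 * (v - m) by unfold ky; split_ifs <;> omega]
    omega

/-- rowfn ∘ vOf ∘ yf of phiM M recovers the row index -/
lemma SMH.yf_phi (H : SMH M) {r : ℕ} (hr : r ≤ m) :
    rowfn M (vOf M (yf (phiM M) r)) = r ∧ yf (phiM M) r < dK M := by
  have hpm := H.pm_phi
  have hbh := H.bh_phi
  have hlt : yf (phiM M) r < dK M := hbh.yf_lt_d (by omega)
  refine ⟨?_, hlt⟩
  rcases Nat.eq_or_lt_of_le hr with he | hlt2
  · have h0 := yf_m (B := phiM M)
    rw [hpm] at h0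
    rw [he, h0, vOf_zero, rowfn_m]
  · rw [yf_lo (by omega), show pm (phiM M) - r = m - r by omega, H.pf_phi (m - r) (by omega)]
    by_cases hc : cNZ M (2 * m - r)
    · have hKe : Kp M (2 * (m - r)) := by
        have := (Kp_even M (t := m - r) (by omega) (by omega)).2
          (by rw [show m + (m - r) = 2 * m - r by omega]; exact hc)
        exact this
      have e1 : Nat.count (Kp M) (2 * (m - r) + 1)
          = Nat.count (Kp M) (2 * (m - r)) + 1 := by
        rw [Nat.count_succ, if_pos hKe]
      rw [e1, Nat.add_sub_cancel,
        show 2 * (m - r) = ky m (2 * m - r) by unfold ky; split_ifs <;> omega,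
        vOf_count M (by omega) (Or.inr hc), rowfn_eq,
        show 2 * m - (2 * m - r) = r by omega, if_pos (H.ha r (by omega))]
    · have hKe : ¬ Kp M (2 * (m - r)) := by
        intro hh
        have := (Kp_even M (t := m - r) (by omega) (by omega)).1 hh
        rw [show m + (m - r) = 2 * m - r by omega] at this
        exact hc this
      have e1 : Nat.count (Kp M) (2 * (m - r) + 1)
          = Nat.count (Kp M) (2 * (m - r)) := by
        rw [Nat.count_succ, if_neg hKe]
        omega
      have hKodd : Kp M (2 * (m - r) - 1) := by
        have := Kp_odd M (show m - r - 1 < m by omega)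
        rwa [show 2 * (m - r - 1) + 1 = 2 * (m - r) - 1 by omega] at this
      have e2 : Nat.count (Kp M) (2 * (m - r))
          = Nat.count (Kp M) (2 * (m - r) - 1) + 1 := by
        have hcs := Nat.count_succ (p := Kp M) (2 * (m - r) - 1)
        rw [if_pos hKodd, show 2 * (m - r) - 1 + 1 = 2 * (m - r) by omega] at hcs
        omega
      rw [e1, e2, Nat.add_sub_cancel,
        show 2 * (m - r) - 1 = ky m r by unfold ky; split_ifs <;> omega,
        vOf_count M (by omega) (Or.inl (by omega)), rowfn_eq,
        if_neg hc]

lemma SMH.rt_psi_phi_ext (H : SMH M) (r v : ℕ) :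
    ext (psiM (phiM M)) r v = ext M r v := by
  have hpm := H.pm_phi
  rw [psiM_ext]
  by_cases hgood : r ≤ m ∧ r ≤ v ∧ v + r ≤ 2 * m ∧ (v ≤ m ∨ cNZ M v)
  · obtain ⟨hg1, hg2, hg3, hg4⟩ := hgood
    have hcond : r ≤ pm (phiM M) ∧ r ≤ v ∧ v + r ≤ 2 * pm (phiM M) ∧
        (v ≤ pm (phiM M) ∨ czB (phiM M) (pf (phiM M) (v - pm (phiM M) - 1))) := by
      refine ⟨by omega, hg2, by omega, ?_⟩
      rcases Nat.lt_or_ge (pm (phiM M)) v with h | h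
      · right
        have hcv : cNZ M v := hg4.resolve_left (by omega)
        rw [show v - pm (phiM M) - 1 = v - m - 1 by omega,
          H.pf_phi (v - m - 1) (by omega)]
        exact (H.czB_phi (show v - m - 1 < m by omega)).2
          (by rw [show m + 1 + (v - m - 1) = v by omega]; exact hcv)
      · exact Or.inl h
    rw [if_pos hcond]
    have hKky : Kp M (ky m v) := (Kp_ky M (by omega)).2 hg4
    have hxd : Nat.count (Kp M) (ky m v) < dK M := countK_lt M hKky
    obtain ⟨hyr, hyd⟩ := H.yf_phi hg1
    rw [H.xf_phi (by omega) hg4, phiM_ext M hxd hyd, hyr,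
      vOf_count M (by omega) hg4]
  · rw [if_neg ?side]
    case side =>
      intro hcond
      apply hgood
      refine ⟨by omega, hcond.2.1, by omega, ?_⟩
      rcases Nat.lt_or_ge m v with h | h
      · right
        have hcz := hcond.2.2.2.resolve_left (by omega)
        rw [show v - pm (phiM M) - 1 = v - m - 1 by omega] at hcz
        have hvm : v - m - 1 < m := by omega
        rw [H.pf_phi (v - m - 1) (by omega)] at hcz
        have := (H.czB_phi hvm).1 hcz
        rwa [show m + 1 + (v - m - 1) = v by omega] at this
      · exact Or.inl h
    symm
    push_neg at hgood
    rcases Nat.lt_or_ge m r with h | h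
    · exact H.hrow0 _ _ h
    · rcases Nat.lt_or_ge v r with h2 | h2
      · exact H.hUTe _ _ h2
      · rcases Nat.lt_or_ge (2 * m) (v + r) with h3 | h3
        · exact H.hSTe _ _ (by omega)
        · obtain ⟨hgt, hnc⟩ := hgood h h2 (by omega)
          exact H.colT (fun hh => hh.elim (fun h1 => by omega) hnc)

lemma SMH.rt_psi_phi (H : SMH M) : psi (phi ⟨2 * m + 1, M⟩) = ⟨2 * m + 1, M⟩ := by
  show (⟨2 * pm (phiM M) + 1, psiM (phiM M)⟩ : SMat) = ⟨2 * m + 1, M⟩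
  exact smat_eq (by rw [H.pm_phi]) (H.rt_psi_phi_ext)

end RTC

/-! ### roundtrip φ ∘ ψ = id -/

section RTD

variable {d : ℕ} {B : Mat d}

lemma BH.cnz_lo (H : BH B) {v : ℕ} (hv : v < pm B) : cNZ (psiM B) v := by
  have := H.psi_a ⟨v, by omega⟩ (by simpa using hv)
  exact (cNZ_iff (psiM B) ⟨v, by omega⟩).2 this

lemma BH.cnz_hi (H : BH B) {t : ℕ} (h1 : 1 ≤ t) (h2 : t ≤ pm B) :
    cNZ (psiM B) (pm B + t) ↔ czB B (pf B (t - 1)) := by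
  constructor
  · rintro ⟨r, hr⟩
    rw [psiM_ext] at hr
    by_cases hcond : r ≤ pm B ∧ r ≤ pm B + t ∧ pm B + t + r ≤ 2 * pm B ∧
        (pm B + t ≤ pm B ∨ czB B (pf B (pm B + t - pm B - 1)))
    · have := hcond.2.2.2.resolve_left (by omega)
      rwa [show pm B + t - pm B - 1 = t - 1 by omega] at this
    · rw [if_neg hcond] at hr
      exact absurd rfl hr
  · intro hcz
    have hstep : pf B (t - 1 + 1) = pf B (t - 1) + 2 := by rw [pf_succ, if_pos hcz]
    have hxfb : xf B (pm B + t) = pf B (t - 1) + 1 := by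
      rw [xf_hi (by omega), show pm B + t - pm B = t - 1 + 1 by omega, hstep]
      omega
    have hc1d : pf B (t - 1 + 1) ≤ d := by
      have := (pf_le_iff B (c := t - 1 + 1) (c' := pm B)).2 (by omega)
      rw [H.pf_pm] at this
      exact this
    have hX1 : 1 ≤ xf B (pm B + t) := by rw [hxfb]; omega
    have hXd : xf B (pm B + t) < d := by rw [hxfb]; omega
    obtain ⟨r, hr, hne⟩ := H.row_hit hX1 hXd
    have hreg : r ≤ pm B + t ∧ pm B + t + r ≤ 2 * pm B := by
      by_contra hh
      push_neg at hh
      rcases Nat.lt_or_ge (pm B + t) r with h | h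
      · exact hne (H.RZ hr (Or.inl h))
      · exact hne (H.RZ hr (Or.inr (by omega)))
    refine ⟨r, ?_⟩
    rw [H.cell_eq hr (by omega)
      (Or.inr (by rw [show pm B + t - pm B - 1 = t - 1 by omega]; exact hcz))]
    exact hne

lemma BH.smh_psi (H : BH B) : SMH (psiM B) where
  hUTe := fun r v h => by
    rw [psiM_ext]
    exact if_neg (fun hc => by omega)
  hSTe := fun r v h => by
    rw [psiM_ext]
    exact if_neg (fun hc => by omega)
  ha := fun v hv => H.cnz_lo hv
  hbb := fun a ha => by
    have h1 := H.psi_b ⟨a, by omega⟩ ⟨2 * pm B - a, by omega⟩ (by simpa using ha)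
      (by show a + (2 * pm B - a) = 2 * pm B; omega)
    rcases h1 with h | h
    · left
      obtain ⟨j, hj⟩ := h
      exact ⟨(j : ℕ), by rw [ext_apply (psiM B) ⟨a, by omega⟩ j]; exact hj⟩
    · right
      exact (cNZ_iff (psiM B) ⟨2 * pm B - a, by omega⟩).2 h

lemma BH.count_psi (H : BH B) : ∀ c, c ≤ pm B →
    Nat.count (Kp (psiM B)) (2 * c + 1) = pf B c := by
  intro c
  induction c with
  | zero =>
    intro _
    rw [show 2 * 0 + 1 = 0 + 1 by omega, Nat.count_succ, Nat.count_zero,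
      if_pos (Kp_zero (psiM B)), pf_zero]
  | succ c ih =>
    intro hc1
    have hc : c < pm B := by omega
    have e1 : Nat.count (Kp (psiM B)) (2 * (c + 1) + 1)
        = Nat.count (Kp (psiM B)) (2 * c + 2) + if Kp (psiM B) (2 * c + 2) then 1 else 0 := by
      rw [show 2 * (c + 1) + 1 = (2 * c + 2) + 1 by omega, Nat.count_succ]
    have e2 : Nat.count (Kp (psiM B)) (2 * c + 2)
        = Nat.count (Kp (psiM B)) (2 * c + 1) + 1 := by
      rw [show 2 * c + 2 = (2 * c + 1) + 1 by omega, Nat.count_succ,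
        if_pos (Kp_odd (psiM B) hc)]
    have e3 : Kp (psiM B) (2 * c + 2) ↔ czB B (pf B c) := by
      have h1 := Kp_even (psiM B) (t := c + 1) (by omega) (by omega)
      rw [show 2 * (c + 1) = 2 * c + 2 by omega] at h1
      refine h1.trans ?_
      have h2 := H.cnz_hi (t := c + 1) (by omega) (by omega)
      rwa [show c + 1 - 1 = c by omega] at h2
    rw [e1, e2, ih (by omega), pf_succ]
    by_cases hcz : czB B (pf B c)
    · rw [if_pos (e3.2 hcz), if_pos hcz]
    · rw [if_neg (fun hh => hcz (e3.1 hh)), if_neg hcz]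

lemma BH.dK_psi (H : BH B) : dK (psiM B) = d := by
  have h1 := H.count_psi (pm B) le_rfl
  rw [H.pf_pm] at h1
  exact h1

lemma BH.vof_pfc (H : BH B) {c : ℕ} (hc : c < pm B) :
    vOf (psiM B) (pf B c) = pm B - 1 - c := by
  rw [vOf_eq, ← H.count_psi c (by omega), Nat.nth_count (Kp_odd (psiM B) hc)]
  unfold kv; split_ifs <;> omega

lemma BH.vof_pfc1 (H : BH B) {c : ℕ} (hc : c < pm B) (hcz : czB B (pf B c)) :
    vOf (psiM B) (pf B c + 1) = pm B + 1 + c := by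
  have e3 : Kp (psiM B) (2 * c + 2) := by
    have h1 := Kp_even (psiM B) (t := c + 1) (by omega) (by omega)
    rw [show 2 * (c + 1) = 2 * c + 2 by omega] at h1
    refine h1.2 ?_
    have h2 := H.cnz_hi (t := c + 1) (by omega) (by omega)
    rw [show c + 1 - 1 = c by omega] at h2
    exact h2.2 hcz
  have e2 : Nat.count (Kp (psiM B)) (2 * c + 2) = pf B c + 1 := by
    rw [show 2 * c + 2 = (2 * c + 1) + 1 by omega, Nat.count_succ,
      if_pos (Kp_odd (psiM B) hc), H.count_psi c (by omega)]
  rw [vOf_eq, ← e2, Nat.nth_count e3]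
  unfold kv; split_ifs <;> omega

lemma BH.vof_zero' (H : BH B) : vOf (psiM B) 0 = pm B := vOf_zero (psiM B)

lemma BH.rt_phi_psi_ext (H : BH B) (X Y : ℕ) :
    ext (phiM (psiM B)) X Y = ext B X Y := by
  rcases Nat.lt_or_ge X (dK (psiM B)) with hX | hX
  swap
  · rw [ext_zero _ (Or.inl hX), ext_zero B (Or.inl (by rw [← H.dK_psi]; exact hX))]
  rcases Nat.lt_or_ge Y (dK (psiM B)) with hY | hY
  swap
  · rw [ext_zero _ (Or.inr hY), ext_zero B (Or.inr (by rw [← H.dK_psi]; exact hY))]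
  have hXd : X < d := by rw [← H.dK_psi]; exact hX
  have hYd : Y < d := by rw [← H.dK_psi]; exact hY
  rw [phiM_ext (psiM B) hX hY]
  -- compute v := vOf (psiM B) X : v ≤ 2m, valid, xf B v = X
  have hXfact : ∃ v, vOf (psiM B) X = v ∧ v ≤ 2 * pm B ∧
      (v ≤ pm B ∨ czB B (pf B (v - pm B - 1))) ∧ xf B v = X := by
    rcases Nat.eq_zero_or_pos X with h0 | h1
    · subst h0
      exact ⟨pm B, H.vof_zero', by omega, Or.inl le_rfl, xf_m⟩
    · obtain ⟨c, hc, hcase⟩ := H.pm_block h1 hXd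
      rcases hcase with he | ⟨he, hcz⟩
      · subst he
        refine ⟨pm B - 1 - c, H.vof_pfc hc, by omega, Or.inl (by omega), ?_⟩
        rw [xf_lo (by omega), show pm B - 1 - (pm B - 1 - c) = c by omega]
      · subst he
        refine ⟨pm B + 1 + c, H.vof_pfc1 hc hcz, by omega,
          Or.inr (by rw [show pm B + 1 + c - pm B - 1 = c by omega]; exact hcz), ?_⟩
        rw [xf_hi (by omega), show pm B + 1 + c - pm B = c + 1 by omega,
          pf_succ, if_pos hcz]
        omega
  obtain ⟨v, hvof, hv2m, hval, hxfv⟩ := hXfact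
  rw [hvof]
  -- compute the row: either zero-row case or r with yf B r = Y
  have hYfact : (∃ r, rowfn (psiM B) (vOf (psiM B) Y) = r ∧ r ≤ pm B ∧ yf B r = Y) ∨
      (pm B < rowfn (psiM B) (vOf (psiM B) Y) ∧ czB B Y) := by
    rcases Nat.eq_zero_or_pos Y with h0 | h1
    · subst h0
      left
      refine ⟨pm B, ?_, le_rfl, yf_m⟩
      rw [H.vof_zero', rowfn_m]
    · obtain ⟨c, hc, hcase⟩ := H.pm_block h1 hYd
      have hrw : rowfn (psiM B) (pm B - 1 - c)
          = if cNZ (psiM B) (pm B + 1 + c) then pm B + 1 + c else pm B - 1 - c := by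
        rw [rowfn_eq, show 2 * pm B - (pm B - 1 - c) = pm B + 1 + c by omega]
      have hcnz : cNZ (psiM B) (pm B + 1 + c) ↔ czB B (pf B c) := by
        have h2 := H.cnz_hi (t := c + 1) (by omega) (by omega)
        rwa [show c + 1 - 1 = c by omega, show pm B + (c + 1) = pm B + 1 + c by omega] at h2
      rcases hcase with he | ⟨he, hcz⟩
      · subst he
        by_cases hcz : czB B (pf B c)
        · right
          rw [H.vof_pfc hc, hrw, if_pos (hcnz.2 hcz)]
          exact ⟨by omega, hcz⟩
        · left
          refine ⟨pm B - 1 - c, ?_, by omega, ?_⟩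
          · rw [H.vof_pfc hc, hrw, if_neg (fun hh => hcz (hcnz.1 hh))]
          · rw [yf_lo (by omega), show pm B - (pm B - 1 - c) = c + 1 by omega,
              pf_succ, if_neg hcz]
            omega
      · subst he
        left
        refine ⟨pm B - 1 - c, ?_, by omega, ?_⟩
        · rw [H.vof_pfc1 hc hcz, rowfn_eq,
            show 2 * pm B - (pm B + 1 + c) = pm B - 1 - c by omega,
            if_pos (H.cnz_lo (by omega))]
        · rw [yf_lo (by omega), show pm B - (pm B - 1 - c) = c + 1 by omega,
            pf_succ, if_pos hcz]
          omega
  rcases hYfact with ⟨r, hrf, hr, hyr⟩ | ⟨hgt, hcz⟩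
  · rw [hrf, H.cell_eq hr hv2m hval, hxfv, hyr]
  · rw [psi_row0 hgt, (hcz X).symm]

lemma BH.rt_phi_psi (H : BH B) : phi (psi ⟨d, B⟩) = ⟨d, B⟩ := by
  show (⟨dK (psiM B), phiM (psiM B)⟩ : SMat) = ⟨d, B⟩
  exact smat_eq H.dK_psi H.rt_phi_psi_ext

end RTD

/-! ### assembly -/

lemma mk_SMH {k' : ℕ} {M : Mat (2 * k' + 1)} (hST : SuperTri M)
    (hca : ∀ j : Fin (2 * k' + 1), (j : ℕ) < k' → colNonzero M j)
    (hcb : ∀ a b : Fin (2 * k' + 1), (a : ℕ) < k' → (a : ℕ) + (b : ℕ) = 2 * k' →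
      rowNonzero M a ∨ colNonzero M b) : SMH M where
  hUTe := fun r v h => ut_ext hST.1 h
  hSTe := fun r v h => by
    unfold ext
    split
    · next hh => exact hST.2 ⟨r, hh.1⟩ ⟨v, hh.2⟩ (show 2 * k' + 1 < r + v + 1 by omega)
    · rfl
  ha := fun v hv => (cNZ_iff M ⟨v, by omega⟩).2 (hca ⟨v, by omega⟩ hv)
  hbb := fun a ha => by
    have h1 := hcb ⟨a, by omega⟩ ⟨2 * k' - a, by omega⟩ (by simpa using ha)
      (by show a + (2 * k' - a) = 2 * k'; omega)
    rcases h1 with h | h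
    · left
      obtain ⟨j, hj⟩ := h
      exact ⟨(j : ℕ), by rw [ext_apply M ⟨a, by omega⟩ j]; exact hj⟩
    · right
      exact (cNZ_iff M ⟨2 * k' - a, by omega⟩).2 h

lemma mk_BH {d : ℕ} {B : Mat d} (hUT : UT B)
    (hrows : ∀ i : Fin d, (i : ℕ) ≠ 0 → rowNonzero B i) (hd : 1 ≤ d) : BH B where
  hUTe := fun x y h => ut_ext hUT h
  hrows := fun x h1 h2 => by
    obtain ⟨j, hj⟩ := hrows ⟨x, h2⟩ (by simpa using (by omega : ¬ (x = 0)))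
    exact ⟨(j : ℕ), by rw [ext_apply B ⟨x, h2⟩ j]; exact hj⟩
  hd := hd

lemma msize_zero_dim (B : Mat 0) : msize B = 0 := by
  unfold msize
  simp

lemma stmt4_bij (n k p : ℕ) (hn : 1 ≤ n) :
    Set.BijOn phi (SMset₃ n k p) (Bset₃ n k p) := by
  have hmt : Set.MapsTo phi (SMset₃ n k p) (Bset₃ n k p) := by
    rintro ⟨dm, M⟩ hA
    obtain ⟨⟨hST, hsz, k', hdim, hca, hcb⟩, hfr, hcc⟩ := hA
    subst hdim
    have H : SMH M := mk_SMH hST hca hcb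
    show (⟨dK M, phiM M⟩ : SMat) ∈ Bset₃ n k p
    exact ⟨⟨phi_UT H, phi_rows H, by rw [phi_msize H, hsz]⟩,
      by rw [phi_frs H, hcc], by rw [phi_lcs H, hfr]⟩
  have hmt' : Set.MapsTo psi (Bset₃ n k p) (SMset₃ n k p) := by
    rintro ⟨d, B⟩ hA
    obtain ⟨⟨hUT, hrows, hsz⟩, hfr, hlc⟩ := hA
    have hd : 1 ≤ d := by
      by_contra hh
      push_neg at hh
      have hd0 : d = 0 := by omega
      subst hd0
      rw [msize_zero_dim B] at hsz
      omega
    have H : BH B := mk_BH hUT hrows hd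
    show (⟨2 * pm B + 1, psiM B⟩ : SMat) ∈ SMset₃ n k p
    exact ⟨⟨psi_ST, by rw [H.psi_msize, hsz], pm B, rfl, H.psi_a, H.psi_b⟩,
      by rw [H.psi_frs, hlc], by rw [H.psi_ccs, hfr]⟩
  have hinv : Set.InvOn psi phi (SMset₃ n k p) (Bset₃ n k p) := by
    constructor
    · rintro ⟨dm, M⟩ hA
      obtain ⟨⟨hST, hsz, k', hdim, hca, hcb⟩, hfr, hcc⟩ := hA
      subst hdim
      exact (mk_SMH hST hca hcb).rt_psi_phi
    · rintro ⟨d, B⟩ hA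
      obtain ⟨⟨hUT, hrows, hsz⟩, hfr, hlc⟩ := hA
      have hd : 1 ≤ d := by
        by_contra hh
        push_neg at hh
        have hd0 : d = 0 := by omega
        subst hd0
        rw [msize_zero_dim B] at hsz
        omega
      exact (mk_BH hUT hrows hd).rt_phi_psi
  exact hinv.bijOn hmt hmt'

end
end S4

theorem stmt4 (n k p : ℕ) (hn : 1 ≤ n) :
    (SMset₃ n k p).ncard = (Bset₃ n k p).ncard := by
  have hbij := S4.stmt4_bij n k p hn
  calc (SMset₃ n k p).ncard
      = (S4.phi '' SMset₃ n k p).ncard := (Set.ncard_image_of_injOn hbij.injOn).symm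
    _ = (Bset₃ n k p).ncard := by rw [hbij.image_eq]
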